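/- In an IEEE floating point system F (with subnormal numbers), if x, y ∈ F and 0 < |x+y| ≤ βν, then |x+y| ≥ α and x+y ∈ F; consequently any nonzero sum of two floating point numbers of absolute value at most βν is itself a floating point number. -/

import Mathlib

noncomputable section

/-- The set of positive normal floating point numbers with exponent `e`. -/
def Eset (β μ : ℕ) (e : ℤ) : Set ℝ :=
  {x | ∃ r : ℕ, r < (β - 1) * β ^ μ ∧ x = (β : ℝ) ^ e * ((β : ℝ) ^ μ + r)}

/-- Perfect floating point system: all integer exponents. -/
def PerfectF (β μ : ℕ) : Set ℝ :=
  {x | x = 0 ∨ ∃ e : ℤ, x ∈ Eset β μ e ∨ -x ∈ Eset β μ e}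

/-- MPFR system: exponents bounded below by `emin`, no subnormals. -/
def MPFRF (β μ : ℕ) (emin : ℤ) : Set ℝ :=
  {x | x = 0 ∨ ∃ e : ℤ, emin ≤ e ∧ (x ∈ Eset β μ e ∨ -x ∈ Eset β μ e)}

/-- Subnormal numbers (both signs) for minimal exponent `emin`. -/
def SubN (β μ : ℕ) (emin : ℤ) : Set ℝ :=
  {x | ∃ r : ℕ, 1 ≤ r ∧ r < β ^ μ ∧ (x = (β : ℝ) ^ emin * r ∨ x = -((β : ℝ) ^ emin * r))}

/-- IEEE system: MPFR system augmented with subnormal numbers. -/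
def IEEEF (β μ : ℕ) (emin : ℤ) : Set ℝ := MPFRF β μ emin ∪ SubN β μ emin

/-- `fl` rounds to nearest in `F`. -/
def RTN (F : Set ℝ) (fl : ℝ → ℝ) : Prop :=
  ∀ z : ℝ, fl z ∈ F ∧ ∀ x ∈ F, |fl z - z| ≤ |x - z|

/-- Recursively rounded sum: `rsum fl y 0 = y 0`,
`rsum fl y (k+1) = fl (k+1) (rsum fl y k + y (k+1))`. -/
def rsum (fl : ℕ → ℝ → ℝ) (y : ℕ → ℝ) : ℕ → ℝ
  | 0 => y 0
  | k + 1 => fl (k + 1) (rsum fl y k + y (k + 1))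

/-- Ties are broken downward. -/
def BreaksTiesDown (F : Set ℝ) (fl : ℝ → ℝ) : Prop :=
  ∀ z : ℝ, ∀ x ∈ F, |x - z| = |fl z - z| → fl z ≤ x

/-- Ties are broken upward. -/
def BreaksTiesUp (F : Set ℝ) (fl : ℝ → ℝ) : Prop :=
  ∀ z : ℝ, ∀ x ∈ F, |x - z| = |fl z - z| → x ≤ fl z


private lemma ieee_int (β μ : ℕ) (hβ : 2 ≤ β) (emin : ℤ) {z : ℝ}
    (hz : z ∈ IEEEF β μ emin) : ∃ m : ℤ, z = (β : ℝ) ^ emin * m := by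
  have hβ0 : (β : ℝ) ≠ 0 := by
    have : (0:ℝ) < β := by exact_mod_cast Nat.lt_of_lt_of_le (by norm_num) hβ
    linarith
  have key : ∀ (e : ℤ), emin ≤ e → ∀ w ∈ Eset β μ e, ∃ m : ℤ, w = (β : ℝ) ^ emin * m := by
    intro e he w hw
    obtain ⟨r, hr, rfl⟩ := hw
    refine ⟨(β : ℤ) ^ (e - emin).toNat * ((β : ℤ) ^ μ + r), ?_⟩
    have h1 : (β : ℝ) ^ e = (β : ℝ) ^ emin * (β : ℝ) ^ (e - emin) := by
      rw [← zpow_add₀ hβ0]; ring_nf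
    have h2 : (β : ℝ) ^ (e - emin) = ((β : ℤ) ^ (e - emin).toNat : ℤ) := by
      push_cast
      rw [← zpow_natCast (β : ℝ), Int.toNat_of_nonneg (by omega)]
    rw [h1, h2]
    push_cast
    ring
  rcases hz with (rfl | ⟨e, he, hE | hE⟩) | ⟨r, _, _, rfl | rfl⟩
  · exact ⟨0, by simp⟩
  · exact key e he _ hE
  · obtain ⟨m, hm⟩ := key e he _ hE
    exact ⟨-m, by push_cast; linarith⟩
  · exact ⟨r, by push_cast; ring⟩
  · exact ⟨-r, by push_cast; ring⟩

private lemma ieee_neg (β μ : ℕ) (emin : ℤ) {z : ℝ}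
    (hz : z ∈ IEEEF β μ emin) : -z ∈ IEEEF β μ emin := by
  rcases hz with (rfl | ⟨e, he, hE | hE⟩) | ⟨r, h1, h2, h3 | h3⟩
  · exact Or.inl (Or.inl (by simp))
  · exact Or.inl (Or.inr ⟨e, he, Or.inr (by simpa using hE)⟩)
  · exact Or.inl (Or.inr ⟨e, he, Or.inl hE⟩)
  · exact Or.inr ⟨r, h1, h2, Or.inr (by rw [h3])⟩
  · exact Or.inr ⟨r, h1, h2, Or.inl (by rw [h3]; ring)⟩

private lemma ieee_mul_mem (β μ : ℕ) (hβ : 2 ≤ β) (emin : ℤ) (k : ℤ)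
    (hk1 : 1 ≤ k) (hk2 : k ≤ ((β * β ^ μ : ℕ) : ℤ)) :
    (β : ℝ) ^ emin * k ∈ IEEEF β μ emin := by
  have hβ0 : (β : ℝ) ≠ 0 := by
    have : (0:ℝ) < β := by exact_mod_cast Nat.lt_of_lt_of_le (by norm_num) hβ
    linarith
  have hsub : ((β - 1) * β ^ μ : ℕ) = β * β ^ μ - β ^ μ := by
    rw [Nat.sub_mul, one_mul]
  have hBpos : 0 < β ^ μ := Nat.pow_pos (n := μ) (by omega)
  have hBle : β ^ μ ≤ β * β ^ μ := Nat.le_mul_of_pos_left _ (by omega)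
  by_cases hc : k < ((β ^ μ : ℕ) : ℤ)
  · -- subnormal
    refine Or.inr ⟨k.toNat, by omega, by omega, Or.inl ?_⟩
    congr 1
    exact_mod_cast (Int.toNat_of_nonneg (by omega)).symm
  · push_neg at hc
    by_cases hd : k < ((β * β ^ μ : ℕ) : ℤ)
    · refine Or.inl (Or.inr ⟨emin, le_refl _, Or.inl ⟨(k - ((β ^ μ : ℕ) : ℤ)).toNat, ?_, ?_⟩⟩)
      · rw [hsub]; omega
      · have h6 : (((k - ((β ^ μ : ℕ) : ℤ)).toNat : ℤ)) = k - ((β ^ μ : ℕ) : ℤ) :=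
          Int.toNat_of_nonneg (by omega)
        rw [show (((k - ((β ^ μ : ℕ) : ℤ)).toNat : ℕ) : ℝ) =
            (((k - ((β ^ μ : ℕ) : ℤ)).toNat : ℤ) : ℝ) by push_cast; ring, h6]
        push_cast
        ring
    · -- k = β ^ (μ + 1)
      have hk : k = ((β * β ^ μ : ℕ) : ℤ) := le_antisymm hk2 (by omega)
      refine Or.inl (Or.inr ⟨emin + 1, by omega, Or.inl ⟨0, ?_, ?_⟩⟩)
      · exact Nat.mul_pos (by omega) hBpos
      · rw [hk, zpow_add₀ hβ0, zpow_one]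
        push_cast
        ring

theorem stmt4 (β μ : ℕ) (hβ : 2 ≤ β) (hμ : 1 ≤ μ) (emin : ℤ)
    (hemin : emin < -(μ : ℤ))
    (x y : ℝ) (hx : x ∈ IEEEF β μ emin) (hy : y ∈ IEEEF β μ emin)
    (h1 : 0 < |x + y|) (h2 : |x + y| ≤ (β : ℝ) * (β : ℝ) ^ (emin + μ)) :
    (β : ℝ) ^ emin ≤ |x + y| ∧ x + y ∈ IEEEF β μ emin := by
  have hβ0 : (0:ℝ) < β := by exact_mod_cast Nat.lt_of_lt_of_le (by norm_num) hβ
  have hne : (β : ℝ) ≠ 0 := ne_of_gt hβ0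
  have hA : (0:ℝ) < (β : ℝ) ^ emin := zpow_pos hβ0 _
  obtain ⟨m, hm⟩ := ieee_int β μ hβ emin hx
  obtain ⟨n, hn⟩ := ieee_int β μ hβ emin hy
  set k : ℤ := m + n with hk
  have hsum : x + y = (β : ℝ) ^ emin * (k : ℝ) := by rw [hm, hn, hk]; push_cast; ring
  have habs : |x + y| = (β : ℝ) ^ emin * |(k : ℝ)| := by
    rw [hsum, abs_mul, abs_of_pos hA]
  have hk0 : k ≠ 0 := by
    intro h
    apply absurd h1
    rw [habs, h]
    simp
  have hge : (1:ℤ) ≤ |k| := by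
    have := abs_pos.mpr hk0
    linarith
  have hk1 : (1:ℝ) ≤ |(k : ℝ)| := by exact_mod_cast hge
  have hpow : (β : ℝ) * (β : ℝ) ^ (emin + μ) = (β : ℝ) ^ emin * ((β * β ^ μ : ℕ) : ℝ) := by
    rw [zpow_add₀ hne, zpow_natCast]
    push_cast
    ring
  have hbound : |(k : ℝ)| ≤ ((β * β ^ μ : ℕ) : ℝ) := by
    have h2' : (β : ℝ) ^ emin * |(k : ℝ)| ≤ (β : ℝ) ^ emin * ((β * β ^ μ : ℕ) : ℝ) := by
      rw [← habs, ← hpow]; exact h2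
    exact le_of_mul_le_mul_left h2' hA
  have hkZ : |k| ≤ ((β * β ^ μ : ℕ) : ℤ) := by exact_mod_cast hbound
  refine ⟨?_, ?_⟩
  · rw [habs]
    nlinarith
  · rcases lt_or_gt_of_ne hk0 with hneg | hpos
    · have hmem := ieee_mul_mem β μ hβ emin (-k) (by omega)
        (by have h := neg_abs_le k; omega)
      have := ieee_neg β μ emin hmem
      have heq : x + y = -((β : ℝ) ^ emin * ((-k : ℤ) : ℝ)) := by
        rw [hsum]; push_cast; ring
      rwa [heq]
    · have hmem := ieee_mul_mem β μ hβ emin k hpos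
        (by have h := le_abs_self k; omega)
      rwa [hsum]
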